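/- If every connected induced subgraph of a graph G admits a multi-chain ordering, then G is weakly chordal: G contains no induced cycle C_n and no induced complement of C_n for any n > 4. -/

import Mathlib

namespace Stmt10Aux

open SimpleGraph

/-- The cycle graph on `ZMod n`. -/
def cyc (n : ℕ) : SimpleGraph (ZMod n) where
  Adj u v := u ≠ v ∧ (u - v = 1 ∨ v - u = 1)
  symm := ⟨fun u v ⟨h1, h2⟩ => ⟨h1.symm, h2.symm⟩⟩
  loopless := ⟨fun u ⟨h, _⟩ => h rfl⟩

/-- The complement of the cycle graph on `ZMod n`. -/
def ccyc (n : ℕ) : SimpleGraph (ZMod n) where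
  Adj u v := u ≠ v ∧ ¬ (u - v = 1 ∨ v - u = 1)
  symm := ⟨fun u v ⟨h1, h2⟩ => ⟨h1.symm, fun hc => h2 hc.symm⟩⟩
  loopless := ⟨fun u ⟨h, _⟩ => h rfl⟩

lemma cast_eq_iff (n a b : ℕ) (ha : a < n) (hb : b < n) :
    ((a : ZMod n) = (b : ZMod n)) ↔ a = b := by
  rw [ZMod.natCast_eq_natCast_iff', Nat.mod_eq_of_lt ha, Nat.mod_eq_of_lt hb]

lemma sub_eq_one_iff (n a b : ℕ) (ha : a < n) (hb : b < n) :
    ((a : ZMod n) - (b : ZMod n) = 1) ↔ (a = b + 1 ∨ (a = 0 ∧ b + 1 = n)) := by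
  rw [sub_eq_iff_eq_add, ← Nat.cast_one, ← Nat.cast_add, ZMod.natCast_eq_natCast_iff',
    Nat.mod_eq_of_lt ha]
  rcases lt_or_ge (1 + b) n with h | h
  · rw [Nat.mod_eq_of_lt h]; omega
  · have hbn : 1 + b = n := by omega
    rw [hbn, Nat.mod_self]; omega

lemma cyc_adj (n a b : ℕ) (ha : a < n) (hb : b < n) :
    (cyc n).Adj (a : ZMod n) (b : ZMod n) ↔
      (a ≠ b ∧ (a = b + 1 ∨ b = a + 1 ∨ (a = 0 ∧ b + 1 = n) ∨ (b = 0 ∧ a + 1 = n))) := by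
  show ((a : ZMod n) ≠ b ∧ _) ↔ _
  rw [Ne, cast_eq_iff n a b ha hb, sub_eq_one_iff n a b ha hb, sub_eq_one_iff n b a hb ha]
  tauto

lemma ccyc_adj (n a b : ℕ) (ha : a < n) (hb : b < n) :
    (ccyc n).Adj (a : ZMod n) (b : ZMod n) ↔
      (a ≠ b ∧ ¬ (a = b + 1 ∨ b = a + 1 ∨ (a = 0 ∧ b + 1 = n) ∨ (b = 0 ∧ a + 1 = n))) := by
  show ((a : ZMod n) ≠ b ∧ ¬ _) ↔ _
  rw [Ne, cast_eq_iff n a b ha hb, sub_eq_one_iff n a b ha hb, sub_eq_one_iff n b a hb ha]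
  tauto

/-- cycle-distance function -/
def cd (n : ℕ) (x : ZMod n) : ℕ := min x.val (n - x.val)

lemma cd_neg (n : ℕ) [NeZero n] (x : ZMod n) : cd n (-x) = cd n x := by
  by_cases h : x = 0
  · rw [h, neg_zero]
  · have hv : x.val < n := ZMod.val_lt x
    have hv0 : x.val ≠ 0 := fun hc => h ((ZMod.val_eq_zero x).mp hc)
    rw [cd, cd, ZMod.neg_val, if_neg h]
    omega

lemma cd_add_one (n : ℕ) (hn : 1 < n) (x : ZMod n) : cd n (x + 1) ≤ cd n x + 1 := by
  haveI : Fact (1 < n) := ⟨hn⟩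
  haveI : NeZero n := ⟨by omega⟩
  have hv : x.val < n := ZMod.val_lt x
  rw [cd, cd, ZMod.val_add, ZMod.val_one]
  rcases eq_or_lt_of_le (Nat.succ_le_of_lt hv) with h | h
  · have e : (x.val + 1) % n = 0 := by
      rw [show x.val + 1 = n from h]; exact Nat.mod_self n
    rw [e]; omega
  · rw [Nat.mod_eq_of_lt h]; omega

lemma cd_sub_one (n : ℕ) (hn : 1 < n) (x : ZMod n) : cd n (x - 1) ≤ cd n x + 1 := by
  haveI : NeZero n := ⟨by omega⟩
  have h : x - 1 = -(-x + 1) := by ring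
  rw [h, cd_neg, ← cd_neg n x]
  exact cd_add_one n hn (-x)

lemma cyc_walk_le (n : ℕ) (hn : 1 < n) {a b : ZMod n} (p : (cyc n).Walk a b) :
    cd n (b - a) ≤ p.length := by
  haveI : NeZero n := ⟨by omega⟩
  induction p with
  | nil => simp [cd, sub_self]
  | @cons u v w h q ih =>
    obtain ⟨-, h2 | h2⟩ := id h
    · -- u - v = 1, so w - u = (w - v) - 1
      have he : w - u = (w - v) - 1 := by rw [← h2]; ring
      rw [SimpleGraph.Walk.length_cons, he]
      exact le_trans (cd_sub_one n hn (w - v)) (by omega)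
    · -- v - u = 1, so w - u = (w - v) + 1
      have he : w - u = (w - v) + 1 := by rw [← h2]; ring
      rw [SimpleGraph.Walk.length_cons, he]
      exact le_trans (cd_add_one n hn (w - v)) (by omega)

lemma cyc_adj_of (n : ℕ) (hn : 1 < n) (x y : ZMod n) (hxy : y - x = 1) : (cyc n).Adj x y := by
  haveI : Fact (1 < n) := ⟨hn⟩
  refine ⟨fun hc => ?_, Or.inr hxy⟩
  rw [hc, sub_self] at hxy
  exact zero_ne_one hxy

lemma cyc_walk_to (n : ℕ) (hn : 1 < n) (k : ℕ) :
    ∃ p : (cyc n).Walk 0 (k : ZMod n), p.length = k := by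
  induction k with
  | zero => exact ⟨SimpleGraph.Walk.nil.copy rfl (by simp), by simp⟩
  | succ k ih =>
    obtain ⟨p, hp⟩ := ih
    refine ⟨p.concat (cyc_adj_of n hn _ _ (by push_cast; ring)), ?_⟩
    rw [SimpleGraph.Walk.length_concat, hp]

lemma cyc_walk_to' (n : ℕ) (hn : 1 < n) (k : ℕ) :
    ∃ p : (cyc n).Walk 0 (-(k : ZMod n)), p.length = k := by
  induction k with
  | zero => exact ⟨SimpleGraph.Walk.nil.copy rfl (by simp), by simp⟩
  | succ k ih =>
    obtain ⟨p, hp⟩ := ih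
    refine ⟨p.concat ((cyc_adj_of n hn (-((k + 1 : ℕ) : ZMod n)) (-(k : ZMod n))
      (by push_cast; ring)).symm), ?_⟩
    rw [SimpleGraph.Walk.length_concat, hp]

lemma cyc_dist (n : ℕ) (hn : 4 < n) (k : ℕ) (hk : k < n) :
    (cyc n).dist 0 (k : ZMod n) = min k (n - k) := by
  haveI : NeZero n := ⟨by omega⟩
  obtain ⟨p, hp⟩ := cyc_walk_to n (by omega) k
  obtain ⟨q, hq⟩ := cyc_walk_to' n (by omega) (n - k)
  have hq' : -(((n - k : ℕ) : ZMod n)) = (k : ZMod n) := by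
    push_cast [Nat.cast_sub hk.le]
    simp [ZMod.natCast_self]
  refine le_antisymm (le_min ?_ ?_) ?_
  · have := SimpleGraph.dist_le p
    omega
  · have := SimpleGraph.dist_le (q.copy rfl hq')
    rw [SimpleGraph.Walk.length_copy, hq] at this
    exact this
  · obtain ⟨w, hw⟩ := (SimpleGraph.Reachable.exists_walk_length_eq_dist ⟨p⟩)
    have hle := cyc_walk_le n (by omega) w
    rw [sub_zero, hw] at hle
    have hv : ((k : ZMod n)).val = k := ZMod.val_cast_of_lt hk
    rw [cd, hv] at hle
    omega

lemma cyc_connected (n : ℕ) (hn : 4 < n) : (cyc n).Connected := by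
  haveI : NeZero n := ⟨by omega⟩
  rw [SimpleGraph.connected_iff]
  refine ⟨fun a b => ?_, ⟨0⟩⟩
  have ra : (cyc n).Reachable 0 a := by
    obtain ⟨p, -⟩ := cyc_walk_to n (by omega) a.val
    exact ⟨p.copy rfl (ZMod.natCast_zmod_val a)⟩
  have rb : (cyc n).Reachable 0 b := by
    obtain ⟨p, -⟩ := cyc_walk_to n (by omega) b.val
    exact ⟨p.copy rfl (ZMod.natCast_zmod_val b)⟩
  exact ra.symm.trans rb

/-- distance transfers along isomorphisms -/
lemma iso_dist_le {α β : Type*} {A : SimpleGraph α} {B : SimpleGraph β} (e : A ≃g B)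
    (u v : α) : B.dist (e u) (e v) ≤ A.dist u v := by
  by_cases h : A.Reachable u v
  · obtain ⟨p, hp⟩ := h.exists_walk_length_eq_dist
    have := SimpleGraph.dist_le (p.map e.toHom)
    rwa [SimpleGraph.Walk.length_map, hp] at this
  · have h' : ¬ B.Reachable (e u) (e v) := fun hc => h (SimpleGraph.Iso.reachable_iff.mp hc)
    rw [SimpleGraph.dist_eq_zero_of_not_reachable h']
    exact Nat.zero_le _

lemma iso_dist {α β : Type*} {A : SimpleGraph α} {B : SimpleGraph β} (e : A ≃g B)
    (u v : α) : B.dist (e u) (e v) = A.dist u v := by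
  refine le_antisymm (iso_dist_le e u v) ?_
  have := iso_dist_le e.symm (e u) (e v)
  simpa using this

/-- translation automorphism of the cycle graph -/
def cycAdd (n : ℕ) (c : ZMod n) : cyc n ≃g cyc n where
  toEquiv := Equiv.addRight c
  map_rel_iff' := by
    intro u v
    simp only [Equiv.coe_addRight]
    show ((u + c ≠ v + c) ∧ _) ↔ ((u ≠ v) ∧ _)
    rw [show (u + c) - (v + c) = u - v from by ring,
      show (v + c) - (u + c) = v - u from by ring, ne_eq, add_left_inj, ← ne_eq]

/-- translation automorphism of the complement cycle graph -/
def ccycAdd (n : ℕ) (c : ZMod n) : ccyc n ≃g ccyc n where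
  toEquiv := Equiv.addRight c
  map_rel_iff' := by
    intro u v
    simp only [Equiv.coe_addRight]
    show ((u + c ≠ v + c) ∧ ¬ _) ↔ ((u ≠ v) ∧ ¬ _)
    rw [show (u + c) - (v + c) = u - v from by ring,
      show (v + c) - (u + c) = v - u from by ring, ne_eq, add_left_inj, ← ne_eq]

lemma cyc_dist_off (n : ℕ) (a : ZMod n) (k : ℕ) :
    (cyc n).dist a ((k : ZMod n) + a) = (cyc n).dist 0 (k : ZMod n) := by
  have h := iso_dist (cycAdd n a) 0 (k : ZMod n)
  have h0 : (cycAdd n a) 0 = a := zero_add a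
  have hk : (cycAdd n a) (k : ZMod n) = (k : ZMod n) + a := rfl
  rw [h0, hk] at h
  exact h

lemma ccyc_dist_off (n : ℕ) (a : ZMod n) (k : ℕ) :
    (ccyc n).dist a ((k : ZMod n) + a) = (ccyc n).dist 0 (k : ZMod n) := by
  have h := iso_dist (ccycAdd n a) 0 (k : ZMod n)
  have h0 : (ccycAdd n a) 0 = a := zero_add a
  have hk : (ccycAdd n a) (k : ZMod n) = (k : ZMod n) + a := rfl
  rw [h0, hk] at h
  exact h

/-- the induced subgraph on the range of an embedding is isomorphic to the pattern graph -/
noncomputable def isoInduce {α V : Type*} (H : SimpleGraph α) (G : SimpleGraph V) (f : α → V)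
    (hinj : Function.Injective f) (hadj : ∀ u v, G.Adj (f u) (f v) ↔ H.Adj u v) :
    H ≃g (G.induce (Set.range f)) where
  toEquiv := Equiv.ofInjective f hinj
  map_rel_iff' := by
    intro a b
    exact hadj a b

lemma dist_eq_two {α : Type*} {H : SimpleGraph α} {x y z : α}
    (h1 : H.Adj x z) (h2 : H.Adj z y) (h3 : ¬ H.Adj x y) (h4 : x ≠ y) : H.dist x y = 2 := by
  have hle : H.dist x y ≤ 2 := by
    have := SimpleGraph.dist_le (SimpleGraph.Walk.cons h1 (SimpleGraph.Walk.cons h2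
      SimpleGraph.Walk.nil))
    simpa using this
  have h0 : 0 < H.dist x y := SimpleGraph.Reachable.pos_dist_of_ne
    ⟨SimpleGraph.Walk.cons h1 (SimpleGraph.Walk.cons h2 SimpleGraph.Walk.nil)⟩ h4
  have h1' : H.dist x y ≠ 1 := fun hc => h3 (SimpleGraph.dist_eq_one_iff_adj.mp hc)
  omega

lemma ccyc_dist_one (n : ℕ) (hn : 4 < n) (k : ℕ) (hk2 : 2 ≤ k) (hk : k ≤ n - 2) :
    (ccyc n).dist 0 (k : ZMod n) = 1 := by
  rw [SimpleGraph.dist_eq_one_iff_adj]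
  have h := (ccyc_adj n 0 k (by omega) (by omega)).mpr (by omega)
  simpa using h

lemma ccyc_dist_two_one (n : ℕ) (hn : 4 < n) : (ccyc n).dist 0 ((1 : ℕ) : ZMod n) = 2 := by
  have h1 : (ccyc n).Adj ((0 : ℕ) : ZMod n) ((3 : ℕ) : ZMod n) :=
    (ccyc_adj n 0 3 (by omega) (by omega)).mpr (by omega)
  have h2 : (ccyc n).Adj ((3 : ℕ) : ZMod n) ((1 : ℕ) : ZMod n) :=
    (ccyc_adj n 3 1 (by omega) (by omega)).mpr (by omega)
  have h3 : ¬ (ccyc n).Adj ((0 : ℕ) : ZMod n) ((1 : ℕ) : ZMod n) := by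
    rw [ccyc_adj n 0 1 (by omega) (by omega)]; omega
  have h4 : ((0 : ℕ) : ZMod n) ≠ ((1 : ℕ) : ZMod n) := by
    rw [Ne, cast_eq_iff n 0 1 (by omega) (by omega)]; omega
  have := dist_eq_two h1 h2 h3 h4
  simpa using this

lemma ccyc_dist_two_last (n : ℕ) (hn : 4 < n) : (ccyc n).dist 0 ((n - 1 : ℕ) : ZMod n) = 2 := by
  have h1 : (ccyc n).Adj ((0 : ℕ) : ZMod n) ((n - 3 : ℕ) : ZMod n) :=
    (ccyc_adj n 0 (n - 3) (by omega) (by omega)).mpr (by omega)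
  have h2 : (ccyc n).Adj ((n - 3 : ℕ) : ZMod n) ((n - 1 : ℕ) : ZMod n) :=
    (ccyc_adj n (n - 3) (n - 1) (by omega) (by omega)).mpr (by omega)
  have h3 : ¬ (ccyc n).Adj ((0 : ℕ) : ZMod n) ((n - 1 : ℕ) : ZMod n) := by
    rw [ccyc_adj n 0 (n - 1) (by omega) (by omega)]; omega
  have h4 : ((0 : ℕ) : ZMod n) ≠ ((n - 1 : ℕ) : ZMod n) := by
    rw [Ne, cast_eq_iff n 0 (n - 1) (by omega) (by omega)]; omega
  have := dist_eq_two h1 h2 h3 h4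
  simpa using this

lemma ccyc_connected (n : ℕ) (hn : 4 < n) : (ccyc n).Connected := by
  haveI : NeZero n := ⟨by omega⟩
  rw [SimpleGraph.connected_iff]
  have key : ∀ x : ZMod n, (ccyc n).Reachable 0 x := by
    intro x
    have hx : ((x.val : ℕ) : ZMod n) = x := ZMod.natCast_zmod_val x
    have hxlt : x.val < n := ZMod.val_lt x
    rw [← hx]
    by_cases h0 : x.val = 0
    · rw [h0, Nat.cast_zero]
    · by_cases h1 : x.val = 1
      · rw [h1]
        have := ccyc_dist_two_one n hn
        exact SimpleGraph.exists_walk_of_dist_ne_zero (by omega) |>.elim fun p _ => ⟨p⟩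
      · by_cases h2 : x.val = n - 1
        · rw [h2]
          have := ccyc_dist_two_last n hn
          exact SimpleGraph.exists_walk_of_dist_ne_zero (by omega) |>.elim fun p _ => ⟨p⟩
        · have h := (ccyc_adj n 0 x.val (by omega) (by omega)).mpr (by omega)
          have h' : (ccyc n).Adj 0 ((x.val : ℕ) : ZMod n) := by simpa using h
          exact h'.reachable
  exact ⟨fun a b => (key a).symm.trans (key b), ⟨0⟩⟩

end Stmt10Aux

open Stmt10Aux

/-- If every connected induced subgraph of `G` admits a multi-chain ordering,
then `G` is weakly chordal: it has no induced `C_n` nor induced complement of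
`C_n` for any `n > 4`. -/
theorem stmt_10 {V : Type*} (G : SimpleGraph V)
    (h : ∀ s : Set V, (G.induce s).Connected →
      ∃ v0 : s, ∀ i : ℕ, ¬ ∃ u u' v v' : s,
        (G.induce s).dist v0 u = i ∧ (G.induce s).dist v0 u' = i ∧
        (G.induce s).dist v0 v = i + 1 ∧ (G.induce s).dist v0 v' = i + 1 ∧
        (G.induce s).Adj u v ∧ (G.induce s).Adj u' v' ∧
        ¬ (G.induce s).Adj u v' ∧ ¬ (G.induce s).Adj u' v) :
    ∀ n : ℕ, 4 < n →
      (¬ ∃ f : ZMod n → V, Function.Injective f ∧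
        ∀ u v, G.Adj (f u) (f v) ↔ (u ≠ v ∧ (u - v = 1 ∨ v - u = 1))) ∧
      (¬ ∃ f : ZMod n → V, Function.Injective f ∧
        ∀ u v, G.Adj (f u) (f v) ↔ (u ≠ v ∧ ¬ (u - v = 1 ∨ v - u = 1))) := by
  intro n hn
  haveI : NeZero n := ⟨by omega⟩
  constructor
  · rintro ⟨f, hfinj, hf⟩
    have hadj : ∀ u v, G.Adj (f u) (f v) ↔ (cyc n).Adj u v := hf
    set φ := isoInduce (cyc n) G f hfinj hadj with hφ
    have conn : (G.induce (Set.range f)).Connected :=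
      (SimpleGraph.Iso.connected_iff φ).mp (cyc_connected n hn)
    obtain ⟨v0, hv0⟩ := h (Set.range f) conn
    obtain ⟨a, ha⟩ := v0.2
    have hφa : φ a = v0 := Subtype.ext ha
    have hdist : ∀ (k : ℕ), k < n →
        (G.induce (Set.range f)).dist v0 (φ ((k : ZMod n) + a)) = min k (n - k) := by
      intro k hk
      rw [← hφa, iso_dist φ, cyc_dist_off, cyc_dist n hn k hk]
    have hAdj : ∀ (j k : ℕ), j < n → k < n →
        ((G.induce (Set.range f)).Adj (φ ((j : ZMod n) + a)) (φ ((k : ZMod n) + a)) ↔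
          (j ≠ k ∧ (j = k + 1 ∨ k = j + 1 ∨ (j = 0 ∧ k + 1 = n) ∨ (k = 0 ∧ j + 1 = n)))) := by
      intro j k hj hk
      rw [φ.map_rel_iff]
      have := (cycAdd n a).map_rel_iff (a := (j : ZMod n)) (b := (k : ZMod n))
      rw [show (cycAdd n a) (j : ZMod n) = (j : ZMod n) + a from rfl,
        show (cycAdd n a) (k : ZMod n) = (k : ZMod n) + a from rfl] at this
      rw [this, cyc_adj n j k hj hk]
    rcases Nat.even_or_odd n with ⟨m, hm⟩ | ⟨m, hm⟩
    · -- even: n = m + m, m ≥ 3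
      exact hv0 (m - 2) ⟨φ ((↑(m - 2) : ZMod n) + a), φ ((↑(m + 2) : ZMod n) + a),
        φ ((↑(m - 1) : ZMod n) + a), φ ((↑(m + 1) : ZMod n) + a),
        by rw [hdist (m - 2) (by omega)]; omega,
        by rw [hdist (m + 2) (by omega)]; omega,
        by rw [hdist (m - 1) (by omega)]; omega,
        by rw [hdist (m + 1) (by omega)]; omega,
        (hAdj (m - 2) (m - 1) (by omega) (by omega)).mpr (by omega),
        (hAdj (m + 2) (m + 1) (by omega) (by omega)).mpr (by omega),
        by rw [hAdj (m - 2) (m + 1) (by omega) (by omega)]; omega,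
        by rw [hAdj (m + 2) (m - 1) (by omega) (by omega)]; omega⟩
    · -- odd: n = 2m + 1, m ≥ 2
      exact hv0 (m - 1) ⟨φ ((↑(m - 1) : ZMod n) + a), φ ((↑(m + 2) : ZMod n) + a),
        φ ((↑m : ZMod n) + a), φ ((↑(m + 1) : ZMod n) + a),
        by rw [hdist (m - 1) (by omega)]; omega,
        by rw [hdist (m + 2) (by omega)]; omega,
        by rw [hdist m (by omega)]; omega,
        by rw [hdist (m + 1) (by omega)]; omega,
        (hAdj (m - 1) m (by omega) (by omega)).mpr (by omega),
        (hAdj (m + 2) (m + 1) (by omega) (by omega)).mpr (by omega),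
        by rw [hAdj (m - 1) (m + 1) (by omega) (by omega)]; omega,
        by rw [hAdj (m + 2) m (by omega) (by omega)]; omega⟩
  · rintro ⟨f, hfinj, hf⟩
    have hadj : ∀ u v, G.Adj (f u) (f v) ↔ (ccyc n).Adj u v := hf
    set φ := isoInduce (ccyc n) G f hfinj hadj with hφ
    have conn : (G.induce (Set.range f)).Connected :=
      (SimpleGraph.Iso.connected_iff φ).mp (ccyc_connected n hn)
    obtain ⟨v0, hv0⟩ := h (Set.range f) conn
    obtain ⟨a, ha⟩ := v0.2
    have hφa : φ a = v0 := Subtype.ext ha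
    have hdist : ∀ (k : ℕ),
        (G.induce (Set.range f)).dist v0 (φ ((k : ZMod n) + a)) = (ccyc n).dist 0 (k : ZMod n) := by
      intro k
      rw [← hφa, iso_dist φ, ccyc_dist_off]
    have hAdj : ∀ (j k : ℕ), j < n → k < n →
        ((G.induce (Set.range f)).Adj (φ ((j : ZMod n) + a)) (φ ((k : ZMod n) + a)) ↔
          (j ≠ k ∧ ¬ (j = k + 1 ∨ k = j + 1 ∨ (j = 0 ∧ k + 1 = n) ∨ (k = 0 ∧ j + 1 = n)))) := by
      intro j k hj hk
      rw [φ.map_rel_iff]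
      have := (ccycAdd n a).map_rel_iff (a := (j : ZMod n)) (b := (k : ZMod n))
      rw [show (ccycAdd n a) (j : ZMod n) = (j : ZMod n) + a from rfl,
        show (ccycAdd n a) (k : ZMod n) = (k : ZMod n) + a from rfl] at this
      rw [this, ccyc_adj n j k hj hk]
    exact hv0 1 ⟨φ ((↑(n - 2) : ZMod n) + a), φ ((↑(2 : ℕ) : ZMod n) + a),
      φ ((↑(1 : ℕ) : ZMod n) + a), φ ((↑(n - 1) : ZMod n) + a),
      by rw [hdist (n - 2), ccyc_dist_one n hn (n - 2) (by omega) (by omega)],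
      by rw [hdist 2, ccyc_dist_one n hn 2 (by omega) (by omega)],
      by rw [hdist 1, ccyc_dist_two_one n hn],
      by rw [hdist (n - 1), ccyc_dist_two_last n hn],
      (hAdj (n - 2) 1 (by omega) (by omega)).mpr (by omega),
      (hAdj 2 (n - 1) (by omega) (by omega)).mpr (by omega),
      by rw [hAdj (n - 2) (n - 1) (by omega) (by omega)]; omega,
      by rw [hAdj 2 1 (by omega) (by omega)]; omega⟩
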